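/- arXiv:2412.20495 — 2 statements merged into one kernel-verified Lean document; each statement's English description precedes it below -/
import Mathlib

section
/- (Utility loss bound for bounded at-risk counts) Let t_1 < … < t_M be event times with counts n_i ≥ c for some constant c > 0, 0 ≤ d_i ≤ n_i, and per-time noises ε_i ≥ 0. Then for every t, |Ŝ_cent(t) − Ŝ_fed(t)| ≤ (1/c) · ∑_{t_i ≤ t} ε_i / (1 + ε_i/n_i), where Ŝ_cent(t) = ∏_{t_i ≤ t} (1 − d_i/n_i) and Ŝ_fed(t) = ∏_{t_i ≤ t} (1 − (d_i + ε_i)/(n_i + ε_i)). -/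
open Finset

lemma abs_prod_sub_prod_le_sum {ι : Type*} (s : Finset ι) (a b f : ι → ℝ)
    (ha : ∀ i ∈ s, |a i| ≤ 1) (hb : ∀ i ∈ s, |b i| ≤ 1)
    (hf : ∀ i ∈ s, |a i - b i| ≤ f i) :
    |∏ i ∈ s, a i - ∏ i ∈ s, b i| ≤ ∑ i ∈ s, f i := by
  classical
  induction s using Finset.induction_on with
  | empty => simp
  | @insert j s hj ih =>
    rw [Finset.prod_insert hj, Finset.prod_insert hj, Finset.sum_insert hj]
    have hQ : |∏ i ∈ s, b i| ≤ 1 := by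
      calc |∏ i ∈ s, b i| = ∏ i ∈ s, |b i| := by rw [Finset.abs_prod]
        _ ≤ ∏ i ∈ s, 1 := Finset.prod_le_prod (fun i _ => abs_nonneg _)
            (fun i hi => hb i (Finset.mem_insert_of_mem hi))
        _ = 1 := by simp
    have haj : |a j| ≤ 1 := ha j (Finset.mem_insert_self _ _)
    have hrec := ih (fun i hi => ha i (Finset.mem_insert_of_mem hi))
      (fun i hi => hb i (Finset.mem_insert_of_mem hi))
      (fun i hi => hf i (Finset.mem_insert_of_mem hi))
    have key : a j * ∏ i ∈ s, a i - b j * ∏ i ∈ s, b i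
        = a j * (∏ i ∈ s, a i - ∏ i ∈ s, b i) + (a j - b j) * ∏ i ∈ s, b i := by ring
    rw [key]
    calc |a j * (∏ i ∈ s, a i - ∏ i ∈ s, b i) + (a j - b j) * ∏ i ∈ s, b i|
        ≤ |a j * (∏ i ∈ s, a i - ∏ i ∈ s, b i)| + |(a j - b j) * ∏ i ∈ s, b i| :=
          abs_add_le _ _
      _ = |a j| * |∏ i ∈ s, a i - ∏ i ∈ s, b i| + |a j - b j| * |∏ i ∈ s, b i| := by
          rw [abs_mul, abs_mul]
      _ ≤ 1 * (∑ i ∈ s, f i) + f j * 1 :=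
          add_le_add (mul_le_mul haj hrec (abs_nonneg _) zero_le_one)
            (mul_le_mul (hf j (Finset.mem_insert_self _ _)) hQ (abs_nonneg _)
              ((abs_nonneg _).trans (hf j (Finset.mem_insert_self _ _))))
      _ = f j + ∑ i ∈ s, f i := by ring

/-- Utility loss bound for bounded at-risk counts `n_i ≥ c > 0`:
`|Ŝ_cent(t) − Ŝ_fed(t)| ≤ (1/c) · ∑_{t_i ≤ t} ε_i / (1 + ε_i/n_i)`. -/
theorem utility_loss_bound_bounded_at_risk (M : ℕ) (τ d n ε : Fin M → ℝ) (c : ℝ)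
    (hτ : StrictMono τ) (hc : 0 < c) (hn : ∀ i, c ≤ n i) (hd0 : ∀ i, 0 ≤ d i)
    (hdn : ∀ i, d i ≤ n i) (hε : ∀ i, 0 ≤ ε i) (t : ℝ) :
    |(∏ i ∈ univ.filter (fun i => τ i ≤ t), (1 - d i / n i))
        - ∏ i ∈ univ.filter (fun i => τ i ≤ t), (1 - (d i + ε i) / (n i + ε i))|
      ≤ (1 / c) * ∑ i ∈ univ.filter (fun i => τ i ≤ t), ε i / (1 + ε i / n i) := by
  rw [Finset.mul_sum]
  refine abs_prod_sub_prod_le_sum _ _ _ _ ?_ ?_ ?_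
  · intro i _
    have hN : 0 < n i := hc.trans_le (hn i)
    have h1 : d i / n i ≤ 1 := div_le_one_of_le₀ (hdn i) hN.le
    have h0 : 0 ≤ d i / n i := div_nonneg (hd0 i) hN.le
    rw [abs_le]; constructor <;> linarith
  · intro i _
    have hN : 0 < n i + ε i := by have := hc.trans_le (hn i); linarith [hε i]
    have h1 : (d i + ε i) / (n i + ε i) ≤ 1 :=
      div_le_one_of_le₀ (by linarith [hdn i]) hN.le
    have h0 : 0 ≤ (d i + ε i) / (n i + ε i) :=
      div_nonneg (by linarith [hd0 i, hε i]) hN.le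
    rw [abs_le]; constructor <;> linarith
  · intro i _
    have hN : 0 < n i := hc.trans_le (hn i)
    have hNE : 0 < n i + ε i := by linarith [hε i]
    have hE := hε i
    have key : (1 - d i / n i) - (1 - (d i + ε i) / (n i + ε i))
        = ε i * (n i - d i) / (n i * (n i + ε i)) := by
      field_simp
      ring
    rw [key, abs_of_nonneg (div_nonneg (mul_nonneg hE (by linarith [hdn i]))
      (mul_nonneg hN.le hNE.le))]
    have hrhs : 1 / c * (ε i / (1 + ε i / n i)) = ε i * n i / (c * (n i + ε i)) := by
      have h1E : 1 + ε i / n i = (n i + ε i) / n i := by field_simp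
      rw [h1E]
      field_simp
    rw [hrhs, div_le_div_iff₀ (by positivity) (by positivity)]
    have h1 : n i - d i ≤ n i := by linarith [hd0 i]
    have h3 : (n i - d i) * c ≤ n i * n i := mul_le_mul h1 (hn i) hc.le hN.le
    have h2 : ε i * (n i - d i) * c ≤ ε i * n i * n i := by
      nlinarith [mul_le_mul_of_nonneg_left h3 hE]
    nlinarith [mul_le_mul_of_nonneg_right h2 hNE.le]
end

section
/- (Continuity of the utility loss) Fix event times t_1 < … < t_M with counts n_i > 0 and 0 ≤ d_i ≤ n_i, and fix a time t. The utility loss ΔS(t; ε) = |∏_{t_i ≤ t} (1 − d_i/n_i) − ∏_{t_i ≤ t} (1 − (d_i + ε_i)/(n_i + ε_i))|, viewed as a function of the noise vector ε ∈ [0,∞)^M, satisfies ΔS(t; ε) ≤ ∑_{i=1}^M ε_i/n_i for all ε, and hence ΔS(t; ε) → 0 as ε → 0. -/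
open Finset Filter Topology

/-- Product difference bound for factors in `[0,1]`. -/
lemma prod_abs_diff_le {ι : Type*} [DecidableEq ι] (s : Finset ι) (f g : ι → ℝ)
    (hf0 : ∀ i ∈ s, 0 ≤ f i) (hf1 : ∀ i ∈ s, f i ≤ 1)
    (hg0 : ∀ i ∈ s, 0 ≤ g i) (hg1 : ∀ i ∈ s, g i ≤ 1) :
    |∏ i ∈ s, f i - ∏ i ∈ s, g i| ≤ ∑ i ∈ s, |f i - g i| := by
  induction s using Finset.induction with
  | empty => simp
  | @insert a s ha ih =>
    rw [Finset.prod_insert ha, Finset.prod_insert ha, Finset.sum_insert ha]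
    have hP0 : 0 ≤ ∏ i ∈ s, f i := Finset.prod_nonneg fun i hi => hf0 i (Finset.mem_insert_of_mem hi)
    have hP1 : ∏ i ∈ s, f i ≤ 1 :=
      Finset.prod_le_one (fun i hi => hf0 i (Finset.mem_insert_of_mem hi))
        (fun i hi => hf1 i (Finset.mem_insert_of_mem hi))
    have hQ0 : 0 ≤ ∏ i ∈ s, g i := Finset.prod_nonneg fun i hi => hg0 i (Finset.mem_insert_of_mem hi)
    have hQ1 : ∏ i ∈ s, g i ≤ 1 :=
      Finset.prod_le_one (fun i hi => hg0 i (Finset.mem_insert_of_mem hi))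
        (fun i hi => hg1 i (Finset.mem_insert_of_mem hi))
    have ha0 : 0 ≤ f a := hf0 a (Finset.mem_insert_self a s)
    have ha1 : f a ≤ 1 := hf1 a (Finset.mem_insert_self a s)
    have ih' := ih (fun i hi => hf0 i (Finset.mem_insert_of_mem hi))
      (fun i hi => hf1 i (Finset.mem_insert_of_mem hi))
      (fun i hi => hg0 i (Finset.mem_insert_of_mem hi))
      (fun i hi => hg1 i (Finset.mem_insert_of_mem hi))
    have key : f a * ∏ i ∈ s, f i - g a * ∏ i ∈ s, g i
        = f a * (∏ i ∈ s, f i - ∏ i ∈ s, g i) + (f a - g a) * ∏ i ∈ s, g i := by ring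
    calc |f a * ∏ i ∈ s, f i - g a * ∏ i ∈ s, g i|
        ≤ |f a * (∏ i ∈ s, f i - ∏ i ∈ s, g i)| + |(f a - g a) * ∏ i ∈ s, g i| := by
          rw [key]; exact abs_add_le _ _
      _ = |f a| * |∏ i ∈ s, f i - ∏ i ∈ s, g i| + |f a - g a| * |∏ i ∈ s, g i| := by
          rw [abs_mul, abs_mul]
      _ ≤ 1 * |∏ i ∈ s, f i - ∏ i ∈ s, g i| + |f a - g a| * 1 := by
          gcongr
          · exact abs_le.mpr ⟨by linarith, ha1⟩
          · exact abs_le.mpr ⟨by linarith, hQ1⟩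
      _ = |∏ i ∈ s, f i - ∏ i ∈ s, g i| + |f a - g a| := by ring
      _ ≤ ∑ i ∈ s, |f i - g i| + |f a - g a| := by linarith
      _ = |f a - g a| + ∑ i ∈ s, |f i - g i| := by ring

/-- Continuity of the utility loss: viewed as a function of the noise vector
`ε ∈ [0,∞)^M`, the utility loss `ΔS(t; ε)` is bounded by `∑ ε_i/n_i` and hence tends
to `0` as `ε → 0`. -/
theorem utility_loss_bound_and_tendsto_zero (M : ℕ) (τ d n : Fin M → ℝ)
    (hτ : StrictMono τ) (hn : ∀ i, 0 < n i) (hd0 : ∀ i, 0 ≤ d i)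
    (hdn : ∀ i, d i ≤ n i) (t : ℝ) :
    (∀ ε : Fin M → ℝ, (∀ i, 0 ≤ ε i) →
        |(∏ i ∈ univ.filter (fun i => τ i ≤ t), (1 - d i / n i))
            - ∏ i ∈ univ.filter (fun i => τ i ≤ t), (1 - (d i + ε i) / (n i + ε i))|
          ≤ ∑ i, ε i / n i) ∧
      Tendsto
        (fun ε : Fin M → ℝ =>
          |(∏ i ∈ univ.filter (fun i => τ i ≤ t), (1 - d i / n i))
            - ∏ i ∈ univ.filter (fun i => τ i ≤ t), (1 - (d i + ε i) / (n i + ε i))|)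
        (𝓝[{ε : Fin M → ℝ | ∀ i, 0 ≤ ε i}] 0) (𝓝 0) := by
  have hbound : ∀ ε : Fin M → ℝ, (∀ i, 0 ≤ ε i) →
      |(∏ i ∈ univ.filter (fun i => τ i ≤ t), (1 - d i / n i))
          - ∏ i ∈ univ.filter (fun i => τ i ≤ t), (1 - (d i + ε i) / (n i + ε i))|
        ≤ ∑ i, ε i / n i := by
    intro ε hε
    have hne : ∀ i, 0 < n i + ε i := fun i => by have := hn i; have := hε i; linarith
    have h1 : ∀ i ∈ univ.filter (fun i => τ i ≤ t), (0:ℝ) ≤ 1 - d i / n i := by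
      intro i _
      have : d i / n i ≤ 1 := (div_le_one (hn i)).mpr (hdn i)
      linarith
    have h2 : ∀ i ∈ univ.filter (fun i => τ i ≤ t), (1 - d i / n i) ≤ 1 := by
      intro i _
      have : 0 ≤ d i / n i := div_nonneg (hd0 i) (hn i).le
      linarith
    have h3 : ∀ i ∈ univ.filter (fun i => τ i ≤ t), (0:ℝ) ≤ 1 - (d i + ε i) / (n i + ε i) := by
      intro i _
      have : (d i + ε i) / (n i + ε i) ≤ 1 := (div_le_one (hne i)).mpr (by have := hdn i; linarith)
      linarith
    have h4 : ∀ i ∈ univ.filter (fun i => τ i ≤ t), (1 - (d i + ε i) / (n i + ε i)) ≤ 1 := by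
      intro i _
      have : 0 ≤ (d i + ε i) / (n i + ε i) := div_nonneg (by have := hd0 i; have := hε i; linarith) (hne i).le
      linarith
    calc |(∏ i ∈ univ.filter (fun i => τ i ≤ t), (1 - d i / n i))
          - ∏ i ∈ univ.filter (fun i => τ i ≤ t), (1 - (d i + ε i) / (n i + ε i))|
        ≤ ∑ i ∈ univ.filter (fun i => τ i ≤ t),
            |(1 - d i / n i) - (1 - (d i + ε i) / (n i + ε i))| :=
          prod_abs_diff_le _ _ _ h1 h2 h3 h4
      _ ≤ ∑ i ∈ univ.filter (fun i => τ i ≤ t), ε i / n i := by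
          apply Finset.sum_le_sum
          intro i _
          have hni := hn i; have hεi := hε i; have hnei := hne i
          have hdi := hd0 i; have hdni := hdn i
          have hexpr : (1 - d i / n i) - (1 - (d i + ε i) / (n i + ε i))
              = (d i + ε i) / (n i + ε i) - d i / n i := by ring
          rw [hexpr, abs_of_nonneg]
          · rw [div_sub_div _ _ (ne_of_gt hnei) (ne_of_gt hni), div_le_div_iff₀ (by positivity) hni]
            nlinarith [mul_nonneg (mul_nonneg hεi hni.le) (by linarith : (0:ℝ) ≤ d i + ε i)]
          · rw [sub_nonneg, div_le_div_iff₀ hni hnei]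
            nlinarith
      _ ≤ ∑ i, ε i / n i := by
          apply Finset.sum_le_sum_of_subset_of_nonneg (Finset.filter_subset _ _)
          intro i _ _
          exact div_nonneg (hε i) (hn i).le
  refine ⟨hbound, ?_⟩
  apply squeeze_zero'
  · exact Filter.Eventually.of_forall fun ε => abs_nonneg _
  · filter_upwards [self_mem_nhdsWithin] with ε hε
    exact hbound ε hε
  · have hcont : Continuous (fun ε : Fin M → ℝ => ∑ i, ε i / n i) := by
      apply continuous_finset_sum
      intro i _
      exact (continuous_apply i).div_const _
    have h0 : (fun ε : Fin M → ℝ => ∑ i, ε i / n i) 0 = 0 := by simp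
    exact (hcont.tendsto' 0 0 h0).mono_left nhdsWithin_le_nhds
end
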